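/- Let A be an abelian category, α: X → Y a morphism, π: Y → C a cokernel of α, P an injective object, and ι: C → P a monomorphism. Then the morphism (0, ι ∘ π): α → (0 → P) in the morphism category Mor(A) is a left approximation of α with respect to objects of the form (0 → Q) with Q injective: every morphism in Mor(A) from α to an object (0 → Q) with Q injective factors through (0, ι ∘ π). -/

import Mathlib

universe v u

open CategoryTheory Limits ZeroObject

/-- **Observation (Section 5).** Let `A` be an abelian category, `α : X ⟶ Y` a
morphism, `π : Y ⟶ C` a cokernel of `α`, `P` an injective object and `ι : C ⟶ P` a
monomorphism.  Then `(0, ι ∘ π) : α ⟶ (0 → P)` is a left approximation of `α` in the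
morphism category `Mor(A)` with respect to the objects `(0 → Q)` with `Q` injective. -/
theorem left_approximation_in_morphism_category
    {A : Type u} [Category.{v} A] [Abelian A]
    {X Y C : A} (α : X ⟶ Y) (π : Y ⟶ C) (w : α ≫ π = 0)
    (hcoker : IsColimit (CokernelCofork.ofπ π w))
    (P : A) (hP : Injective P) (ι : C ⟶ P) (hι : Mono ι) :
    ∀ (Q : A), Injective Q → ∀ (φ : Arrow.mk α ⟶ Arrow.mk (0 : (0 : A) ⟶ Q)),
      ∃ ψ : Arrow.mk (0 : (0 : A) ⟶ P) ⟶ Arrow.mk (0 : (0 : A) ⟶ Q),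
        Arrow.homMk (u := (0 : X ⟶ (0 : A))) (v := π ≫ ι)
          (by simp only [Arrow.mk_hom]; rw [reassoc_of% w]; simp) ≫ ψ = φ := by
  intro Q hQ φ
  have hw : α ≫ φ.right = 0 := by
    have := φ.w
    simp only [Arrow.mk_hom] at this
    rw [← this]; simp
  -- factor φ.right through the cokernel π
  obtain ⟨g, hg⟩ : ∃ g : C ⟶ Q, π ≫ g = φ.right :=
    ⟨hcoker.desc (CokernelCofork.ofπ φ.right hw),
     hcoker.fac (CokernelCofork.ofπ φ.right hw) WalkingParallelPair.one⟩
  -- lift g along the mono ι using injectivity of Q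
  obtain ⟨h, hh⟩ := hQ.factors g ι
  refine ⟨Arrow.homMk (u := (0 : (0 : A) ⟶ (0 : A))) (v := h) (by simp), ?_⟩
  ext
  · apply (isZero_zero A).eq_of_tgt
  · simp [hh, hg]
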